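/- Let p be an odd prime and R = 𝔽_p[τ]/(τ^p). In the complex 0 → R →(∂₂) R⊕R →(∂₁) R → 0 with ∂₂(x) = (τ^{p-1}x, −τx) and ∂₁(x,y) = τx, one has H_1 = ker ∂₁ / im ∂₂ ≅ τ^{p−2}R, an R-module of 𝔽_p-dimension 2. -/
import Mathlib


open Polynomial TensorProduct

set_option maxHeartbeats 1000000
set_option synthInstance.maxHeartbeats 1000000

/-- `R = 𝔽_p[τ]/(τ^p)`, realized as a quotient of the polynomial ring. -/
abbrev Rp (p : ℕ) : Type :=
  Polynomial (ZMod p) ⧸ Ideal.span {(X : Polynomial (ZMod p)) ^ p}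

/-- The class `τ` of the variable `X` in `R = 𝔽_p[τ]/(τ^p)`. -/
noncomputable def tau (p : ℕ) : Rp p :=
  Ideal.Quotient.mk _ X

lemma tau_pow_p (p : ℕ) : tau p ^ p = 0 := by
  rw [tau, ← map_pow, Ideal.Quotient.eq_zero_iff_mem]
  exact Ideal.subset_span rfl

/-- The augmentation `R → 𝔽_p` sending `τ` to `0`. -/
noncomputable def aug (p : ℕ) [Fact p.Prime] : Rp p →ₐ[ZMod p] ZMod p :=
  Ideal.Quotient.liftₐ _ (aeval 0) (by
    intro a ha
    rw [Ideal.mem_span_singleton] at ha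
    obtain ⟨c, rfl⟩ := ha
    simp [zero_pow (Fact.out : p.Prime).ne_zero])

instance RpCharP (p : ℕ) [Fact p.Prime] : CharP (Rp p) p := by
  have h : Function.Injective (algebraMap (ZMod p) (Rp p)) := by
    have : (aug p).toRingHom.comp (algebraMap (ZMod p) (Rp p)) = RingHom.id (ZMod p) :=
      RingHom.ext_zmod _ _
    intro x y hxy
    have := congrArg (aug p) hxy
    simpa [Algebra.algebraMap_eq_smul_one, map_smul] using this
  exact charP_of_injective_algebraMap h p

lemma mk_eq_zero_iff (p : ℕ) (f : Polynomial (ZMod p)) :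
    Ideal.Quotient.mk (Ideal.span {(X : Polynomial (ZMod p)) ^ p}) f = 0 ↔ X ^ p ∣ f := by
  rw [Ideal.Quotient.eq_zero_iff_mem, Ideal.mem_span_singleton]

lemma ann_lemma (p k : ℕ) (hk : k ≤ p) (x : Rp p) (h : tau p ^ k * x = 0) :
    ∃ g : Rp p, x = tau p ^ (p - k) * g := by
  obtain ⟨f, rfl⟩ := Ideal.Quotient.mk_surjective x
  have hdvd : (X : Polynomial (ZMod p)) ^ p ∣ X ^ k * f := by
    rw [← mk_eq_zero_iff, map_mul, map_pow]
    exact h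
  rw [X_pow_dvd_iff] at hdvd
  have hdvd2 : (X : Polynomial (ZMod p)) ^ (p - k) ∣ f := by
    rw [X_pow_dvd_iff]
    intro d hd
    have := hdvd (d + k) (by omega)
    rwa [coeff_X_pow_mul] at this
  obtain ⟨g, hg⟩ := hdvd2
  exact ⟨Ideal.Quotient.mk _ g, by rw [hg, map_mul, map_pow]; rfl⟩

lemma smul_mk (p : ℕ) (a : ZMod p) (f : Polynomial (ZMod p)) :
    a • (Ideal.Quotient.mk (Ideal.span {(X : Polynomial (ZMod p)) ^ p}) f) =
      Ideal.Quotient.mk _ (C a * f) := by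
  rw [← smul_eq_C_mul]
  exact (Submodule.Quotient.mk_smul _ a f).symm

lemma tau_pow (p k : ℕ) :
    tau p ^ k = Ideal.Quotient.mk (Ideal.span {(X : Polynomial (ZMod p)) ^ p}) (X ^ k) := by
  rw [tau, map_pow]

lemma indep_lemma (p : ℕ) (hp3 : 3 ≤ p) (a b : ZMod p)
    (h : a • tau p ^ (p - 2) + b • tau p ^ (p - 1) = 0) : a = 0 ∧ b = 0 := by
  have h' : Ideal.Quotient.mk (Ideal.span {(X : Polynomial (ZMod p)) ^ p})
      (C a * X ^ (p - 2) + C b * X ^ (p - 1)) = 0 := by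
    rw [map_add, ← smul_mk, ← smul_mk, ← tau_pow, ← tau_pow]
    exact h
  rw [mk_eq_zero_iff, X_pow_dvd_iff] at h'
  have ha := h' (p - 2) (by omega)
  have hb := h' (p - 1) (by omega)
  have hne : p - 2 ≠ p - 1 := by omega
  simp [coeff_X_pow, hne, hne.symm] at ha hb
  exact ⟨ha, hb⟩

lemma span_repr (p : ℕ) (hp3 : 3 ≤ p) (z : Rp p)
    (hz : z ∈ Ideal.span {tau p ^ (p - 2)}) :
    ∃ a b : ZMod p, z = a • tau p ^ (p - 2) + b • tau p ^ (p - 1) := by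
  rw [Ideal.mem_span_singleton] at hz
  obtain ⟨r, hr⟩ := hz
  obtain ⟨f, rfl⟩ := Ideal.Quotient.mk_surjective r
  set a := f.coeff 0 with hadef
  set b := f.coeff 1 with hbdef
  refine ⟨a, b, ?_⟩
  have hX2 : (X : Polynomial (ZMod p)) ^ 2 ∣ (f - C a - C b * X) := by
    rw [X_pow_dvd_iff]
    intro d hd
    interval_cases d <;> simp [hadef, hbdef]
  obtain ⟨g, hg⟩ := hX2
  have hf : f = C a + C b * X + X ^ 2 * g := by
    linear_combination hg
  have ea : Ideal.Quotient.mk (Ideal.span {(X : Polynomial (ZMod p)) ^ p}) (C a)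
      = a • (1 : Rp p) := by
    have := smul_mk p a 1
    rw [map_one, mul_one] at this
    exact this.symm
  have eb : Ideal.Quotient.mk (Ideal.span {(X : Polynomial (ZMod p)) ^ p}) (C b * X)
      = b • tau p := by
    rw [tau]
    exact (smul_mk p b X).symm
  have e1 : tau p ^ (p - 2) * tau p = tau p ^ (p - 1) := by
    rw [← pow_succ]
    congr 1
    omega
  have e2 : tau p ^ (p - 2) * tau p ^ 2 = 0 := by
    rw [← pow_add, (by omega : p - 2 + 2 = p), tau_pow_p]
  rw [hr, hf, map_add, map_add, ea, eb, map_mul, map_pow, ← tau]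
  rw [mul_add, mul_add, mul_smul_comm, mul_smul_comm, mul_one, e1, ← mul_assoc, e2, zero_mul,
    add_zero]

lemma part2 (p : ℕ) [Fact p.Prime] (hp3 : 3 ≤ p) :
    Module.finrank (ZMod p) (Ideal.span {tau p ^ (p - 2)} : Ideal (Rp p)) = 2 := by
  set I : Ideal (Rp p) := Ideal.span {tau p ^ (p - 2)} with hI
  have mem1 : tau p ^ (p - 2) ∈ I := Ideal.subset_span rfl
  have mem2 : tau p ^ (p - 1) ∈ I := by
    rw [hI, Ideal.mem_span_singleton]
    exact ⟨tau p, by rw [← pow_succ]; congr 1; omega⟩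
  have memab : ∀ c : ZMod p × ZMod p, c.1 • tau p ^ (p - 2) + c.2 • tau p ^ (p - 1) ∈ I :=
    fun c => Submodule.add_mem _ (Submodule.smul_of_tower_mem _ _ mem1)
      (Submodule.smul_of_tower_mem _ _ mem2)
  let e : ZMod p × ZMod p →ₗ[ZMod p] I :=
    { toFun := fun c => ⟨c.1 • tau p ^ (p - 2) + c.2 • tau p ^ (p - 1), memab c⟩
      map_add' := by
        intro x y
        apply Subtype.ext
        simp [add_smul]
        ring
      map_smul' := by
        intro m x
        apply Subtype.ext
        simp [mul_smul, smul_add] }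
  have hbij : Function.Bijective e := by
    constructor
    · intro x y hxy
      have h : (x.1 - y.1) • tau p ^ (p - 2) + (x.2 - y.2) • tau p ^ (p - 1) = 0 := by
        have := congrArg (Subtype.val) hxy
        simp only [e, LinearMap.coe_mk, AddHom.coe_mk] at this
        rw [sub_smul, sub_smul]
        rw [← sub_eq_zero] at this ⊢
        linear_combination this
      obtain ⟨h1, h2⟩ := indep_lemma p hp3 _ _ h
      have : x.1 = y.1 := by rwa [sub_eq_zero] at h1
      have : x.2 = y.2 := by rwa [sub_eq_zero] at h2
      exact Prod.ext ‹x.1 = y.1› ‹x.2 = y.2›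
    · rintro ⟨z, hz⟩
      obtain ⟨a, b, hab⟩ := span_repr p hp3 z hz
      exact ⟨(a, b), Subtype.ext hab.symm⟩
  have := (LinearEquiv.ofBijective e hbij).finrank_eq
  rw [← this, Module.finrank_prod, Module.finrank_self]

lemma part1 (p : ℕ) [Fact p.Prime] (hp3 : 3 ≤ p) :
    Nonempty ((↥(LinearMap.ker ((LinearMap.lsmul (Rp p) (Rp p) (tau p)).comp
        (LinearMap.fst (Rp p) (Rp p) (Rp p)))) ⧸
        Submodule.comap (LinearMap.ker ((LinearMap.lsmul (Rp p) (Rp p) (tau p)).comp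
          (LinearMap.fst (Rp p) (Rp p) (Rp p)))).subtype
          (LinearMap.range (LinearMap.prod
            (LinearMap.lsmul (Rp p) (Rp p) (tau p ^ (p - 1)))
            (LinearMap.lsmul (Rp p) (Rp p) (-(tau p)))))) ≃ₗ[Rp p]
        (Ideal.span {tau p ^ (p - 2)} : Ideal (Rp p))) := by
  set d1 : Rp p × Rp p →ₗ[Rp p] Rp p :=
    (LinearMap.lsmul (Rp p) (Rp p) (tau p)).comp (LinearMap.fst (Rp p) (Rp p) (Rp p)) with hd1
  set d2 : Rp p →ₗ[Rp p] Rp p × Rp p :=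
    LinearMap.prod (LinearMap.lsmul (Rp p) (Rp p) (tau p ^ (p - 1)))
      (LinearMap.lsmul (Rp p) (Rp p) (-(tau p))) with hd2
  set I : Ideal (Rp p) := Ideal.span {tau p ^ (p - 2)} with hI
  set K : Submodule (Rp p) (Rp p × Rp p) := LinearMap.ker d1 with hK
  have e1 : tau p ^ (p - 2) * tau p = tau p ^ (p - 1) := by
    rw [← pow_succ]; congr 1; omega
  have e4 : tau p * tau p ^ (p - 1) = 0 := by
    rw [← pow_succ', (by omega : p - 1 + 1 = p), tau_pow_p]
  have hKmem : ∀ v : Rp p × Rp p, v ∈ K ↔ tau p * v.1 = 0 := by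
    intro v
    rw [hK, LinearMap.mem_ker, hd1]
    simp [LinearMap.lsmul, smul_eq_mul]
  let f0 : Rp p × Rp p →ₗ[Rp p] Rp p :=
    LinearMap.fst (Rp p) (Rp p) (Rp p) +
      (LinearMap.lsmul (Rp p) (Rp p) (tau p ^ (p - 2))).comp (LinearMap.snd (Rp p) (Rp p) (Rp p))
  have hf0 : ∀ v : Rp p × Rp p, f0 v = v.1 + tau p ^ (p - 2) * v.2 := by
    intro v
    simp [f0, LinearMap.lsmul, smul_eq_mul]
  have hmem : ∀ v : K, f0 (K.subtype v) ∈ I := by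
    rintro ⟨v, hv⟩
    rw [hKmem] at hv
    obtain ⟨g, hg⟩ := ann_lemma p 1 (by omega) v.1 (by simpa using hv)
    rw [Submodule.coe_subtype, hf0]
    refine Ideal.add_mem _ ?_ (Ideal.mul_mem_right _ _ (Ideal.subset_span rfl))
    rw [hI, Ideal.mem_span_singleton, hg]
    exact ⟨tau p * g, by rw [← mul_assoc, e1]⟩
  let ψ : K →ₗ[Rp p] I := LinearMap.codRestrict (I.restrictScalars (Rp p)) (f0.comp K.subtype) hmem
  have hψ : ∀ v : K, (ψ v : Rp p) = (v : Rp p × Rp p).1 + tau p ^ (p - 2) * (v : Rp p × Rp p).2 := by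
    intro v
    simp only [ψ, LinearMap.codRestrict_apply, LinearMap.comp_apply, Submodule.coe_subtype]
    exact hf0 _
  have hsurj : Function.Surjective ψ := by
    rintro ⟨z, hz⟩
    rw [hI, Ideal.mem_span_singleton] at hz
    obtain ⟨r, hr⟩ := hz
    refine ⟨⟨(0, r), (hKmem _).2 (by simp)⟩, Subtype.ext ?_⟩
    rw [hψ]
    show (0 : Rp p) + tau p ^ (p - 2) * r = z
    rw [zero_add, ← hr]
  have hd2app : ∀ c : Rp p, d2 c = (tau p ^ (p - 1) * c, -(tau p * c)) := by
    intro c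
    rw [hd2]
    simp [LinearMap.prod_apply, Pi.prod, smul_eq_mul]
  have hker : Submodule.comap K.subtype (LinearMap.range d2) = LinearMap.ker ψ := by
    ext v
    simp only [Submodule.mem_comap, LinearMap.mem_range, LinearMap.mem_ker, Submodule.coe_subtype]
    constructor
    · rintro ⟨c, hc⟩
      apply Subtype.ext
      rw [hψ]
      rw [hd2app] at hc
      have h1 : (v : Rp p × Rp p).1 = tau p ^ (p - 1) * c := by rw [← hc]
      have h2 : (v : Rp p × Rp p).2 = -(tau p * c) := by rw [← hc]
      have e5 : tau p ^ (p - 2) * (tau p * c) = tau p ^ (p - 1) * c := by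
        rw [← mul_assoc, e1]
      rw [h1, h2]
      have e6 : tau p ^ (p - 1) * c + tau p ^ (p - 2) * -(tau p * c) = 0 := by
        linear_combination -e5
      rw [e6]
      rfl
    · intro h0
      have h0' : (v : Rp p × Rp p).1 + tau p ^ (p - 2) * (v : Rp p × Rp p).2 = 0 := by
        have := congrArg Subtype.val h0
        rwa [hψ] at this
      have hv1 : tau p * (v : Rp p × Rp p).1 = 0 := (hKmem _).1 v.2
      have hann : tau p ^ (p - 1) * (v : Rp p × Rp p).2 = 0 := by
        have := congrArg (fun z => tau p * z) h0'
        simp only [mul_add, hv1, zero_add, mul_zero] at this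
        rw [← mul_assoc, mul_comm (tau p), e1] at this
        exact this
      obtain ⟨c, hc⟩ := ann_lemma p (p - 1) (by omega) _ hann
      rw [(by omega : p - (p - 1) = 1), pow_one] at hc
      refine ⟨-c, ?_⟩
      rw [hd2app]
      have hx : (v : Rp p × Rp p).1 = tau p ^ (p - 1) * (-c) := by
        have : (v : Rp p × Rp p).1 = -(tau p ^ (p - 2) * (v : Rp p × Rp p).2) := by
          linear_combination h0'
        rw [this, hc, ← mul_assoc, e1]
        ring
      have hy : (v : Rp p × Rp p).2 = -(tau p * (-c)) := by
        rw [hc]; ring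
      exact Prod.ext hx.symm hy.symm
  exact ⟨(Submodule.quotEquivOfEq _ _ hker).trans (ψ.quotKerEquivOfSurjective hsurj)⟩

/-- In the complex `0 → R →(∂₂) R⊕R →(∂₁) R → 0` with `∂₂ x = (τ^{p-1}x, -τx)` and
`∂₁ (x,y) = τx`, the first homology `ker ∂₁ / im ∂₂` is isomorphic to `τ^{p-2}R`, an
`R`-module of `𝔽_p`-dimension `2`. -/
theorem H1_of_V_complex (p : ℕ) [Fact p.Prime] (hodd : Odd p) :
    letI d1 : Rp p × Rp p →ₗ[Rp p] Rp p :=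
      (LinearMap.lsmul (Rp p) (Rp p) (tau p)).comp (LinearMap.fst (Rp p) (Rp p) (Rp p))
    letI d2 : Rp p →ₗ[Rp p] Rp p × Rp p :=
      LinearMap.prod (LinearMap.lsmul (Rp p) (Rp p) (tau p ^ (p - 1)))
        (LinearMap.lsmul (Rp p) (Rp p) (-(tau p)))
    Nonempty ((↥(LinearMap.ker d1) ⧸
        Submodule.comap (LinearMap.ker d1).subtype (LinearMap.range d2)) ≃ₗ[Rp p]
        (Ideal.span {tau p ^ (p - 2)} : Ideal (Rp p))) ∧
    Module.finrank (ZMod p) (Ideal.span {tau p ^ (p - 2)} : Ideal (Rp p)) = 2 := by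
  have hp3 : 3 ≤ p := by
    have h2 : 2 ≤ p := (Fact.out : p.Prime).two_le
    obtain ⟨k, hk⟩ := hodd
    omega
  exact ⟨part1 p hp3, part2 p hp3⟩
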